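/- If Z₁,...,Zₙ are i.i.d. random variables, Q is a finite nonempty set of permutations of {1,...,n}, σ* is uniform on Q independent of C = (Z₁,...,Zₙ), and h is a real-valued measurable scoring function on sequences of length n, then for every k ∈ {1,...,|Q|}, the probability that h(C) has rank k (with uniform random tie-breaking) among the multiset {h(σ(σ*)⁻¹C) : σ ∈ Q} equals 1/|Q|. -/

import Mathlib

open MeasureTheory ProbabilityTheory

instance {n : ℕ} (Q : Finset (Equiv.Perm (Fin n))) : MeasurableSpace ↥Q := ⊤
instance {n m : ℕ} (Q : Finset (Equiv.Perm (Fin n))) : MeasurableSpace (↥Q ≃ Fin m) := ⊤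

/-- The sequence `c` permuted by `σ`. -/
def permSeq {n : ℕ} {α : Type*} (σ : Equiv.Perm (Fin n)) (c : Fin n → α) : Fin n → α :=
  fun i => c (σ i)

/-- Rank (starting from 1) of the entry indexed by `i` among the values `H j`,
with ties among equal values broken according to the priorities `p`. -/
noncomputable def tbRank {ι : Type*} [Fintype ι] [DecidableEq ι] (H : ι → ℝ) {m : ℕ}
    (p : ι ≃ Fin m) (i : ι) : ℕ :=
  1 + (Finset.univ.filter (fun j => H j < H i ∨ (H j = H i ∧ p j < p i))).card

set_option linter.unusedSectionVars false

section Comb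
variable {ι : Type*} [Fintype ι] [DecidableEq ι] (H : ι → ℝ) {m : ℕ} (p : ι ≃ Fin m)

private def key (i : ι) : ℝ ×ₗ Fin m := toLex (H i, p i)

lemma key_inj : Function.Injective (key H p) := by
  intro a b hab
  have := congrArg ofLex hab
  have h2 : p a = p b := congrArg Prod.snd this
  exact p.injective h2

lemma cond_iff (i j : ι) :
    (H j < H i ∨ (H j = H i ∧ p j < p i)) ↔ key H p j < key H p i := by
  rw [key, key, Prod.Lex.lt_iff]
  exact Iff.rfl

lemma count_lt {a b : ι} (hab : key H p a < key H p b) :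
    (Finset.univ.filter (fun j => H j < H a ∨ (H j = H a ∧ p j < p a))).card <
    (Finset.univ.filter (fun j => H j < H b ∨ (H j = H b ∧ p j < p b))).card := by
  apply Finset.card_lt_card
  have hsub : (Finset.univ.filter (fun j => H j < H a ∨ (H j = H a ∧ p j < p a)))
      ⊆ (Finset.univ.filter (fun j => H j < H b ∨ (H j = H b ∧ p j < p b))) := by
    intro j hj
    simp only [Finset.mem_filter, Finset.mem_univ, true_and, cond_iff] at hj ⊢
    exact hj.trans hab
  rw [Finset.ssubset_iff_of_subset hsub]
  refine ⟨a, ?_, ?_⟩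
  · simp only [Finset.mem_filter, Finset.mem_univ, true_and]
    exact (cond_iff H p b a).mpr hab
  · simp

lemma tbRank_injective : Function.Injective (tbRank H p) := by
  intro a b hab
  by_contra hne
  rcases (key_inj H p |>.ne hne).lt_or_gt with hl | hl
  · exact absurd hab (by simpa [tbRank] using (count_lt H p hl).ne)
  · exact absurd hab.symm (by simpa [tbRank] using (count_lt H p hl).ne)

lemma tbRank_mem_Icc (i : ι) : tbRank H p i ∈ Finset.Icc 1 (Fintype.card ι) := by
  rw [Finset.mem_Icc]
  constructor
  · exact Nat.le_add_right 1 _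
  · have hsub : (Finset.univ.filter (fun j => H j < H i ∨ (H j = H i ∧ p j < p i)))
        ⊆ Finset.univ.erase i := by
      intro j hj
      simp only [Finset.mem_filter, Finset.mem_univ, true_and, cond_iff] at hj
      rw [Finset.mem_erase]
      refine ⟨fun hji => ?_, Finset.mem_univ j⟩
      subst hji; exact lt_irrefl _ hj
    have := Finset.card_le_card hsub
    rw [Finset.card_erase_of_mem (Finset.mem_univ i), Finset.card_univ] at this
    have hpos : 1 ≤ Fintype.card ι := Fintype.card_pos_iff.mpr ⟨i⟩
    unfold tbRank
    omega

lemma tbRank_existsUnique (k : ℕ) (hk1 : 1 ≤ k) (hk2 : k ≤ m) :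
    ∃! i, tbRank H p i = k := by
  have hcard : Fintype.card ι = m := by
    rw [Fintype.card_congr p, Fintype.card_fin]
  have himg : Finset.univ.image (tbRank H p) = Finset.Icc 1 m := by
    apply Finset.eq_of_subset_of_card_le
    · intro x hx
      simp only [Finset.mem_image] at hx
      obtain ⟨i, -, rfl⟩ := hx
      simpa [hcard] using tbRank_mem_Icc H p i
    · rw [Finset.card_image_of_injective _ (tbRank_injective H p), Finset.card_univ,
        Nat.card_Icc, hcard]
      omega
  have hk : k ∈ Finset.univ.image (tbRank H p) := by
    rw [himg, Finset.mem_Icc]; exact ⟨hk1, hk2⟩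
  simp only [Finset.mem_image, Finset.mem_univ, true_and] at hk
  obtain ⟨i, hi⟩ := hk
  exact ⟨i, hi, fun j hj => tbRank_injective H p (hj.trans hi.symm)⟩

end Comb

lemma measurable_permSeq {n : ℕ} {α : Type*} [MeasurableSpace α] (σ : Equiv.Perm (Fin n)) :
    Measurable (permSeq (α := α) σ) :=
  measurable_pi_lambda _ fun i => measurable_pi_apply _

lemma map_permSeq_eq {Ω α : Type*} [MeasurableSpace Ω] [MeasurableSpace α]
    (μ : Measure Ω) [IsProbabilityMeasure μ] {n : ℕ} (C : Ω → Fin n → α) (hC : Measurable C)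
    (hIndep : iIndepFun (fun i ω => C ω i) μ)
    (hIdent : ∀ i j : Fin n, IdentDistrib (fun ω => C ω i) (fun ω => C ω j) μ μ)
    (e : Equiv.Perm (Fin n)) :
    (μ.map C).map (permSeq e) = μ.map C := by
  rcases Nat.eq_zero_or_pos n with hn | hn
  · subst hn
    have : permSeq (α := α) e = id := by
      funext c; funext i; exact i.elim0
    rw [this, Measure.map_id]
  · set i₀ : Fin n := ⟨0, hn⟩
    have hmi : ∀ i : Fin n, Measurable fun ω => C ω i :=
      fun i => (measurable_pi_apply i).comp hC
    set ν₀ : Measure α := μ.map fun ω => C ω i₀ with hν₀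
    haveI : IsProbabilityMeasure ν₀ := Measure.isProbabilityMeasure_map (hmi i₀).aemeasurable
    have hpi : Measure.pi (fun _ : Fin n => ν₀) = μ.map C := by
      apply Measure.pi_eq
      intro s hs
      rw [Measure.map_apply hC (MeasurableSet.univ_pi hs)]
      have hpre : C ⁻¹' Set.univ.pi s = ⋂ i ∈ Finset.univ, (fun ω => C ω i) ⁻¹' s i := by
        ext ω; simp [Set.mem_pi]
      rw [hpre, hIndep.measure_inter_preimage_eq_mul Finset.univ (fun i _ => hs i)]
      refine Finset.prod_congr rfl fun i _ => ?_
      rw [← Measure.map_apply (hmi i) (hs i), (hIdent i i₀).map_eq]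
    have hmp : MeasurePreserving (permSeq (α := α) e)
        (Measure.pi fun _ : Fin n => ν₀) (Measure.pi fun _ : Fin n => ν₀) := by
      have h1 := measurePreserving_arrowCongr' (fun _ : Fin n => ν₀) (fun _ : Fin n => ν₀)
        e.symm (MeasurableEquiv.refl α)
        (fun _ => ⟨measurable_id, Measure.map_id⟩)
      have h2 : ⇑(MeasurableEquiv.arrowCongr' e.symm (MeasurableEquiv.refl α))
          = permSeq (α := α) e := by
        funext c
        funext i
        simp [MeasurableEquiv.arrowCongr', Equiv.arrowCongr', Equiv.arrowCongr, permSeq]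
      rwa [h2] at h1
    rw [← hpi, hmp.map_eq]

lemma measurable_F {α : Type*} [MeasurableSpace α] {n : ℕ} (h : (Fin n → α) → ℝ)
    (hh : Measurable h) (Q : Finset (Equiv.Perm (Fin n))) {m : ℕ}
    (s : ↥Q) (t : ↥Q ≃ Fin m) :
    Measurable fun d : Fin n → α =>
      tbRank (fun σ : ↥Q => h (permSeq (σ : Equiv.Perm (Fin n)) d)) t s := by
  have hps : ∀ σ : Equiv.Perm (Fin n), Measurable fun d : Fin n → α => h (permSeq σ d) :=
    fun σ => hh.comp (measurable_permSeq σ)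
  unfold tbRank
  simp only [Finset.card_filter]
  apply Measurable.add measurable_const
  apply Finset.measurable_sum
  intro j _
  apply Measurable.ite _ measurable_const measurable_const
  have : {d : Fin n → α | h (permSeq (↑j) d) < h (permSeq (↑s) d)
      ∨ (h (permSeq (↑j) d) = h (permSeq (↑s) d) ∧ t j < t s)}
      = {d | h (permSeq (↑j) d) < h (permSeq (↑s) d)}
        ∪ ({d | h (permSeq (↑j) d) = h (permSeq (↑s) d)} ∩ {_d | t j < t s}) := by
    ext d; simp [Set.mem_union, Set.mem_inter_iff, Set.mem_setOf_eq]
  rw [this]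
  exact (measurableSet_lt (hps _) (hps _)).union
    ((measurableSet_eq_fun (hps _) (hps _)).inter (MeasurableSet.const _))



/-- Theorem 1 of the paper: if `Z₁, …, Zₙ` are i.i.d., `σ*` is uniform on a finite nonempty
set `Q` of permutations independent of `C = (Z₁, …, Zₙ)` (as is the tie-breaking), and `h`
is a measurable scoring function, then for every `k ∈ {1, …, |Q|}` the probability that
`h(C)` has rank `k` among `{h(σ (σ*)⁻¹ C) | σ ∈ Q}` equals `1/|Q|`. -/
theorem rank_of_hC_uniform
    {Ω α : Type*} [MeasurableSpace Ω] [MeasurableSpace α]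
    (μ : Measure Ω) [IsProbabilityMeasure μ]
    (n : ℕ) (C : Ω → Fin n → α) (hC : Measurable C)
    (hIndepCoord : iIndepFun (fun i ω => C ω i) μ)
    (hIdent : ∀ i j : Fin n, IdentDistrib (fun ω => C ω i) (fun ω => C ω j) μ μ)
    (h : (Fin n → α) → ℝ) (hh : Measurable h)
    (Q : Finset (Equiv.Perm (Fin n))) (hQ : Q.Nonempty)
    (S : Ω → ↥Q) (T : Ω → (↥Q ≃ Fin Q.card))
    (hSTmeas : Measurable (fun ω => (S ω, T ω)))
    (hne : (Finset.univ : Finset (↥Q × (↥Q ≃ Fin Q.card))).Nonempty)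
    (hUnif : μ.map (fun ω => (S ω, T ω)) = (PMF.uniformOfFinset Finset.univ hne).toMeasure)
    (hInd : IndepFun C (fun ω => (S ω, T ω)) μ)
    (k : ℕ) (hk1 : 1 ≤ k) (hk2 : k ≤ Q.card) :
    μ {ω | tbRank
        (fun σ : ↥Q => h (permSeq (σ : Equiv.Perm (Fin n))
          (permSeq ((S ω : Equiv.Perm (Fin n)))⁻¹ (C ω))))
        (T ω) (S ω) = k}
      = 1 / (Q.card : ENNReal) := by
  classical
  set ν : Measure (Fin n → α) := μ.map C with hν
  haveI : IsProbabilityMeasure ν := Measure.isProbabilityMeasure_map hC.aemeasurable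
  set F : (Fin n → α) → ↥Q → (↥Q ≃ Fin Q.card) → ℕ := fun d s t =>
    tbRank (fun σ : ↥Q => h (permSeq (σ : Equiv.Perm (Fin n)) d)) t s with hF
  set Dset : ↥Q × (↥Q ≃ Fin Q.card) → Set (Fin n → α) := fun st => {d | F d st.1 st.2 = k}
    with hDset
  have hDmeas : ∀ st, MeasurableSet (Dset st) :=
    fun st => (measurable_F h hh Q st.1 st.2) (measurableSet_singleton k)
  -- singletons in the product are measurable
  have hsing : ∀ st : ↥Q × (↥Q ≃ Fin Q.card), MeasurableSet {st} := by
    intro st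
    have : ({st.1} : Set ↥Q) ×ˢ ({st.2} : Set (↥Q ≃ Fin Q.card)) = {st} := by
      rw [Set.singleton_prod_singleton]
    rw [← this]
    exact MeasurableSet.prod trivial trivial
  set A : ↥Q × (↥Q ≃ Fin Q.card) → Set Ω := fun st =>
    (C ⁻¹' (permSeq ((st.1 : Equiv.Perm (Fin n)))⁻¹ ⁻¹' Dset st))
      ∩ ((fun ω => (S ω, T ω)) ⁻¹' {st}) with hA
  have hE : {ω | tbRank
        (fun σ : ↥Q => h (permSeq (σ : Equiv.Perm (Fin n))
          (permSeq ((S ω : Equiv.Perm (Fin n)))⁻¹ (C ω))))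
        (T ω) (S ω) = k} = ⋃ st, A st := by
    ext ω
    simp only [hA, Set.mem_setOf_eq, Set.mem_iUnion, Set.mem_inter_iff, Set.mem_preimage,
      Set.mem_singleton_iff, hDset, hF]
    constructor
    · intro hw
      exact ⟨(S ω, T ω), hw, rfl⟩
    · rintro ⟨⟨s, t⟩, hw, hst⟩
      rw [Prod.ext_iff] at hst
      obtain ⟨hs, ht⟩ := hst
      dsimp only at hs ht
      subst hs; subst ht
      exact hw
  have hAmeas : ∀ st, MeasurableSet (A st) := fun st =>
    (hC ((measurable_permSeq _) (hDmeas st))).inter (hSTmeas (hsing st))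
  have hdisj : Pairwise (Function.onFun Disjoint A) := by
    intro st st' hne'
    rw [Function.onFun, Set.disjoint_left]
    rintro ω ⟨-, h1⟩ ⟨-, h2⟩
    rw [Set.mem_preimage, Set.mem_singleton_iff] at h1 h2
    exact hne' (h1 ▸ h2)
  rw [hE, measure_iUnion hdisj hAmeas, tsum_fintype]
  -- value of each term
  set N : ℕ := (Finset.univ : Finset (↥Q × (↥Q ≃ Fin Q.card))).card with hN
  have hterm : ∀ st, μ (A st) = ν (Dset st) * (N : ENNReal)⁻¹ := by
    intro st
    rw [hA]
    rw [hInd.measure_inter_preimage_eq_mul _ _ ((measurable_permSeq _) (hDmeas st)) (hsing st)]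
    congr 1
    · rw [← Measure.map_apply hC ((measurable_permSeq _) (hDmeas st)), ← hν,
        ← Measure.map_apply (measurable_permSeq _) (hDmeas st),
        map_permSeq_eq μ C hC hIndepCoord hIdent]
    · rw [← Measure.map_apply hSTmeas (hsing st), hUnif,
        PMF.toMeasure_apply_singleton _ _ (hsing st), PMF.uniformOfFinset_apply]
      simp [hN]
  simp only [hterm]
  rw [← Finset.sum_mul]
  -- sum the Dset measures
  have hsum : ∑ st : ↥Q × (↥Q ≃ Fin Q.card), ν (Dset st)
      = (Fintype.card (↥Q ≃ Fin Q.card) : ENNReal) := by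
    rw [Fintype.sum_prod_type, Finset.sum_comm]
    have hinner : ∀ t : ↥Q ≃ Fin Q.card, ∑ s : ↥Q, ν (Dset (s, t)) = 1 := by
      intro t
      have huniq : ∀ d : Fin n → α, ∃! s : ↥Q, F d s t = k := by
        intro d
        exact tbRank_existsUnique (fun σ : ↥Q => h (permSeq (σ : Equiv.Perm (Fin n)) d)) t
          k hk1 (by rwa [])
      have hdisj2 : Pairwise (Function.onFun Disjoint fun s : ↥Q => Dset (s, t)) := by
        intro s s' hss'
        rw [Function.onFun, Set.disjoint_left]
        intro d h1 h2
        exact hss' (((huniq d).unique h1 h2))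
      have hcover : (⋃ s : ↥Q, Dset (s, t)) = Set.univ := by
        rw [Set.eq_univ_iff_forall]
        intro d
        obtain ⟨s, hs, -⟩ := huniq d
        exact Set.mem_iUnion.mpr ⟨s, hs⟩
      rw [← tsum_fintype (L := SummationFilter.unconditional _), ← measure_iUnion hdisj2 (fun s => hDmeas (s, t)), hcover,
        measure_univ]
    simp only [hinner]
    simp
  rw [hsum]
  -- final arithmetic
  have hNval : N = Q.card * Fintype.card (↥Q ≃ Fin Q.card) := by
    rw [hN, Finset.card_univ, Fintype.card_prod, Fintype.card_coe]
  obtain ⟨⟨s0, t0⟩, -⟩ := hne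
  haveI : Nonempty (↥Q ≃ Fin Q.card) := ⟨t0⟩
  have hcT : (Fintype.card (↥Q ≃ Fin Q.card) : ENNReal) ≠ 0 := by
    exact_mod_cast Nat.cast_ne_zero.mpr Fintype.card_ne_zero
  have hQ0 : (Q.card : ENNReal) ≠ 0 := by
    exact_mod_cast Nat.cast_ne_zero.mpr (Finset.card_ne_zero_of_mem (hQ.choose_spec))
  rw [hNval, Nat.cast_mul, ENNReal.mul_inv (Or.inl hQ0) (Or.inl (ENNReal.natCast_ne_top _)),
    mul_comm ((Q.card : ENNReal))⁻¹ ((Fintype.card (↥Q ≃ Fin Q.card) : ENNReal))⁻¹,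
    ← mul_assoc, ENNReal.mul_inv_cancel hcT (ENNReal.natCast_ne_top _), one_mul, one_div]
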